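/- Let n > 2 be an integer, p > (n+2)/(n−2), and let Q(α) = α(n−2−α). Assume ((n−2)/2)² ≥ p·Q(2/(p−1)). Let φ ∈ C²(ℝⁿ) be positive, radially symmetric (φ(x) = g(|x|) for some function g), satisfy −Δφ = φ^p on ℝⁿ, and satisfy lim_{|x|→∞} |x|²·φ(x)^{p−1} = Q(2/(p−1)). Then |x|²·φ(x)^{p−1} ≤ Q(2/(p−1)) for every x ∈ ℝⁿ. -/

import Mathlib

open MeasureTheory Real Filter

/-- The Laplacian of `u : ℝⁿ → ℝ`, as the sum of the second partial derivatives
in the coordinate directions. -/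
noncomputable def lap {n : ℕ} (u : EuclideanSpace ℝ (Fin n) → ℝ)
    (x : EuclideanSpace ℝ (Fin n)) : ℝ :=
  ∑ i : Fin n,
    fderiv ℝ (fun y => fderiv ℝ u y (EuclideanSpace.single i 1)) x (EuclideanSpace.single i 1)

section Auxiliary


lemma second_dir {n : ℕ} {φ : EuclideanSpace ℝ (Fin n) → ℝ} (hφ : ContDiff ℝ 2 φ)
    (x v : EuclideanSpace ℝ (Fin n)) :
    fderiv ℝ (fun y => fderiv ℝ φ y v) x v
      = deriv (deriv (fun t : ℝ => φ (x + t • v))) 0 := by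
  have hd1 : Differentiable ℝ φ := hφ.differentiable (by norm_num)
  have hΨ : ContDiff ℝ 1 (fderiv ℝ φ) := hφ.fderiv_right (le_refl _)
  have hline : ∀ t : ℝ, HasDerivAt (fun t : ℝ => x + t • v) v t := by
    intro t
    simpa using ((hasDerivAt_id t).smul_const v).const_add x
  have h1 : ∀ t : ℝ, HasDerivAt (fun t : ℝ => φ (x + t • v)) (fderiv ℝ φ (x + t • v) v) t := by
    intro t
    exact (hd1 _).hasFDerivAt.comp_hasDerivAt t (hline t)
  have hderiv1 : deriv (fun t : ℝ => φ (x + t • v)) = fun t => fderiv ℝ φ (x + t • v) v :=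
    funext fun t => (h1 t).deriv
  rw [hderiv1]
  have hΨx : HasFDerivAt (fderiv ℝ φ) (fderiv ℝ (fderiv ℝ φ) x) x :=
    (hΨ.differentiable (by norm_num) x).hasFDerivAt
  have h2 : HasDerivAt (fun t : ℝ => fderiv ℝ φ (x + t • v)) (fderiv ℝ (fderiv ℝ φ) x v) 0 := by
    have hx0 : HasFDerivAt (fderiv ℝ φ) (fderiv ℝ (fderiv ℝ φ) x) (x + (0:ℝ) • v) := by
      simpa using hΨx
    have := hx0.comp_hasDerivAt 0 (hline 0)
    simpa [Function.comp_def] using this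
  have h3 : HasDerivAt (fun t : ℝ => fderiv ℝ φ (x + t • v) v)
      ((fderiv ℝ (fderiv ℝ φ) x v) v) 0 := by
    have := (ContinuousLinearMap.apply ℝ ℝ v).hasFDerivAt.comp_hasDerivAt 0 h2
    simpa [Function.comp_def] using this
  rw [h3.deriv]
  have h4 : HasFDerivAt (fun y => fderiv ℝ φ y v)
      ((ContinuousLinearMap.apply ℝ ℝ v).comp (fderiv ℝ (fderiv ℝ φ) x)) x :=
    (ContinuousLinearMap.apply ℝ ℝ v).hasFDerivAt.comp x hΨx
  rw [h4.fderiv]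
  rfl

lemma deriv_shift {g : ℝ → ℝ} (hg : ContDiff ℝ 2 g) (r : ℝ) :
    deriv (deriv (fun t : ℝ => g (r + t))) 0 = deriv (deriv g) r := by
  have hgd : Differentiable ℝ g := hg.differentiable (by norm_num)
  have hg' : Differentiable ℝ (deriv g) := by
    have : ContDiff ℝ 1 (deriv g) := (contDiff_succ_iff_deriv.1 (by norm_num [one_add_one_eq_two] at hg ⊢; exact hg)).2.2
    exact this.differentiable (by norm_num)
  have h1 : ∀ t : ℝ, HasDerivAt (fun t : ℝ => g (r + t)) (deriv g (r + t)) t := by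
    intro t
    simpa [Function.comp_def] using (hgd (r + t)).hasDerivAt.comp t ((hasDerivAt_id t).const_add r)
  have hde : deriv (fun t : ℝ => g (r + t)) = fun t => deriv g (r + t) := funext fun t => (h1 t).deriv
  rw [hde]
  have h2 : HasDerivAt (fun t : ℝ => deriv g (r + t)) (deriv (deriv g) (r + 0)) 0 := by
    simpa [Function.comp_def] using (hg' (r + 0)).hasDerivAt.comp 0 ((hasDerivAt_id 0).const_add r)
  rw [h2.deriv, add_zero]

lemma deriv_perp {g : ℝ → ℝ} (hg : ContDiff ℝ 2 g) {r : ℝ} (hr : 0 < r) :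
    deriv (deriv (fun t : ℝ => g (Real.sqrt (r ^ 2 + t ^ 2)))) 0 = deriv g r / r := by
  have hgd : Differentiable ℝ g := hg.differentiable (by norm_num)
  have hg' : Differentiable ℝ (deriv g) := by
    have : ContDiff ℝ 1 (deriv g) := (contDiff_succ_iff_deriv.1 (by norm_num [one_add_one_eq_two] at hg ⊢; exact hg)).2.2
    exact this.differentiable (by norm_num)
  set ρ : ℝ → ℝ := fun t => Real.sqrt (r ^ 2 + t ^ 2) with hρdef
  have hqpos : ∀ t : ℝ, 0 < r ^ 2 + t ^ 2 := fun t => by positivity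
  have hρpos : ∀ t : ℝ, 0 < ρ t := fun t => Real.sqrt_pos.2 (hqpos t)
  have hρ0 : ρ 0 = r := by simp [hρdef, Real.sqrt_sq hr.le]
  have hρ : ∀ t : ℝ, HasDerivAt ρ (t / ρ t) t := by
    intro t
    have hq : HasDerivAt (fun t : ℝ => r ^ 2 + t ^ 2) (2 * t) t := by
      simpa using (hasDerivAt_pow 2 t).const_add (r ^ 2)
    have := (Real.hasDerivAt_sqrt (hqpos t).ne').comp t hq
    refine this.congr_deriv ?_
    rw [div_mul_eq_mul_div, one_mul, mul_div_mul_left _ _ (two_ne_zero)]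
  have h1 : ∀ t : ℝ, HasDerivAt (fun t : ℝ => g (ρ t)) (deriv g (ρ t) * (t / ρ t)) t :=
    fun t => (hgd (ρ t)).hasDerivAt.comp t (hρ t)
  have hde : deriv (fun t : ℝ => g (ρ t)) = fun t => deriv g (ρ t) * (t / ρ t) :=
    funext fun t => (h1 t).deriv
  rw [show (fun t : ℝ => g (Real.sqrt (r ^ 2 + t ^ 2))) = fun t => g (ρ t) from rfl, hde]
  have hA : HasDerivAt (fun t : ℝ => deriv g (ρ t)) (deriv (deriv g) (ρ 0) * (0 / ρ 0)) 0 :=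
    (hg' (ρ 0)).hasDerivAt.comp 0 (hρ 0)
  have hB : HasDerivAt (fun t : ℝ => t / ρ t) ((1 * ρ 0 - 0 * (0 / ρ 0)) / ρ 0 ^ 2) 0 :=
    (hasDerivAt_id 0).div (hρ 0) (hρpos 0).ne'
  have h2 := hA.mul hB
  rw [show (fun t : ℝ => deriv g (ρ t) * (t / ρ t)) = ((fun t => deriv g (ρ t)) * fun t => t / ρ t) from rfl, h2.deriv]
  rw [hρ0]
  field_simp
  ring

lemma norm_combo {n : ℕ} (i0 i : Fin n) (hne : i ≠ i0) (r t : ℝ) :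
    ‖r • EuclideanSpace.single i0 (1:ℝ) + t • EuclideanSpace.single i (1:ℝ)‖
      = Real.sqrt (r ^ 2 + t ^ 2) := by
  have h2 : ‖r • EuclideanSpace.single i0 (1:ℝ) + t • EuclideanSpace.single i (1:ℝ)‖ ^ 2
      = r ^ 2 + t ^ 2 := by
    rw [@norm_add_sq_real]
    rw [norm_smul, norm_smul, real_inner_smul_left, real_inner_smul_right]
    simp [EuclideanSpace.inner_single_left, EuclideanSpace.single_apply, hne,
      EuclideanSpace.norm_single, mul_pow, abs_pow, sq_abs]
  rw [← h2, Real.sqrt_sq (norm_nonneg _)]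
lemma lap_radial {n : ℕ} (hn : 0 < n) (i0 : Fin n) {φ : EuclideanSpace ℝ (Fin n) → ℝ}
    (hφ : ContDiff ℝ 2 φ) {g : ℝ → ℝ} (hg : ContDiff ℝ 2 g)
    (hgdef : ∀ t : ℝ, φ (t • EuclideanSpace.single i0 (1:ℝ)) = g t)
    (hradg : ∀ x, φ x = g ‖x‖) {r : ℝ} (hr : 0 < r) :
    lap φ (r • EuclideanSpace.single i0 (1:ℝ))
      = deriv (deriv g) r + ((n : ℝ) - 1) * (deriv g r / r) := by
  have hT : ∀ i : Fin n,
      fderiv ℝ (fun y => fderiv ℝ φ y (EuclideanSpace.single i 1))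
        (r • EuclideanSpace.single i0 (1:ℝ)) (EuclideanSpace.single i 1)
      = if i = i0 then deriv (deriv g) r else deriv g r / r := by
    intro i
    rw [second_dir hφ]
    by_cases hi : i = i0
    · subst hi
      simp only [if_pos rfl]
      rw [show (fun t : ℝ => φ (r • EuclideanSpace.single i (1:ℝ) + t • EuclideanSpace.single i (1:ℝ)))
          = fun t : ℝ => g (r + t) by
        funext t; rw [← add_smul]; exact hgdef (r + t)]
      exact deriv_shift hg r
    · simp only [if_neg hi]
      rw [show (fun t : ℝ => φ (r • EuclideanSpace.single i0 (1:ℝ) + t • EuclideanSpace.single i (1:ℝ)))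
          = fun t : ℝ => g (Real.sqrt (r ^ 2 + t ^ 2)) by
        funext t; rw [hradg, norm_combo i0 i hi]]
      exact deriv_perp hg hr
  unfold lap
  rw [Finset.sum_congr rfl fun i _ => hT i]
  rw [← Finset.add_sum_erase _ _ (Finset.mem_univ i0), if_pos rfl]
  rw [Finset.sum_congr rfl (fun i hi => if_neg (Finset.ne_of_mem_erase hi))]
  rw [Finset.sum_const, Finset.card_erase_of_mem (Finset.mem_univ i0), Finset.card_univ,
    Fintype.card_fin, nsmul_eq_mul, Nat.cast_sub hn, Nat.cast_one]
set_option maxHeartbeats 1000000 in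
lemma radial_bound (p Qv nr : ℝ) (hp1 : 1 < p) (g : ℝ → ℝ) (hg : ContDiff ℝ 2 g)
    (hgpos : ∀ t, 0 < g t)
    (hODE : ∀ r : ℝ, 0 < r →
      deriv (deriv g) r + (nr - 1) * (deriv g r / r) = -(g r ^ p))
    (hQv : Qv = (2/(p-1)) * (nr - 2 - 2/(p-1)))
    (hQvpos : 0 < Qv)
    (hβ : 0 < nr - 2 - 4/(p-1))
    (hstab : (p-1) * Qv ≤ ((nr - 2 - 4/(p-1))/2)^2) :
    ∀ r : ℝ, 0 < r → r ^ 2 * g r ^ (p-1) ≤ Qv := by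
  have hp0 : (0:ℝ) < p - 1 := by linarith
  obtain ⟨α, hα⟩ : ∃ a : ℝ, a = 2/(p-1) := ⟨_, rfl⟩
  have hαpos : 0 < α := by rw [hα]; positivity
  have hα2 : α * (p-1) = 2 := by rw [hα]; field_simp
  obtain ⟨β, hβdef⟩ : ∃ b : ℝ, b = nr - 2 - 2*α := ⟨_, rfl⟩
  have h2α : nr - 2 - 2*α = nr - 2 - 4/(p-1) := by rw [hα]; ring
  have hβpos : 0 < β := by rw [hβdef, h2α]; exact hβ
  have hQv' : Qv = α * (nr - 2 - α) := by rw [hα]; exact hQv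
  have hstab' : (p-1) * Qv ≤ (β/2)^2 := by rw [hβdef, h2α]; exact hstab
  obtain ⟨L, hL⟩ : ∃ l : ℝ, l = Qv ^ (1/(p-1)) := ⟨_, rfl⟩
  have hLpos : 0 < L := by rw [hL]; exact Real.rpow_pos_of_pos hQvpos _
  have hLp : L ^ (p-1) = Qv := by
    rw [hL, ← Real.rpow_mul hQvpos.le, one_div_mul_cancel hp0.ne', Real.rpow_one]
  -- smoothness of g
  have hgd : Differentiable ℝ g := hg.differentiable (by norm_num)
  have hg'd : Differentiable ℝ (deriv g) := by
    have h2 : ContDiff ℝ ((1:ℕ)+1) g := by exact_mod_cast hg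
    exact ((contDiff_succ_iff_deriv (n := 1)).1 (by norm_num [one_add_one_eq_two] at hg ⊢; exact hg)).2.2.differentiable (by norm_num)
  -- Emden-Fowler variables
  obtain ⟨v, hvdef⟩ : ∃ f : ℝ → ℝ, f = fun s => exp (α*s) * g (exp s) := ⟨_, rfl⟩
  obtain ⟨v1, hv1def⟩ : ∃ f : ℝ → ℝ,
    f = fun s => α * (exp (α*s) * g (exp s)) + exp ((α+1)*s) * deriv g (exp s) := ⟨_, rfl⟩
  have hvpos : ∀ s, 0 < v s := fun s => by
    rw [hvdef]; exact mul_pos (exp_pos _) (hgpos _)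
  have hA : ∀ s : ℝ, HasDerivAt (fun s : ℝ => exp (α*s)) (α * exp (α*s)) s := by
    intro s
    have := (Real.hasDerivAt_exp (α*s)).comp s ((hasDerivAt_id s).const_mul α)
    simpa [Function.comp_def, mul_comm] using this
  have hC : ∀ s : ℝ, HasDerivAt (fun s : ℝ => exp ((α+1)*s)) ((α+1) * exp ((α+1)*s)) s := by
    intro s
    have := (Real.hasDerivAt_exp ((α+1)*s)).comp s ((hasDerivAt_id s).const_mul (α+1))
    simpa [Function.comp_def, mul_comm] using this
  have hB : ∀ s : ℝ, HasDerivAt (fun s : ℝ => g (exp s)) (deriv g (exp s) * exp s) s :=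
    fun s => (hgd (exp s)).hasDerivAt.comp s (Real.hasDerivAt_exp s)
  have hD : ∀ s : ℝ, HasDerivAt (fun s : ℝ => deriv g (exp s))
      (deriv (deriv g) (exp s) * exp s) s :=
    fun s => (hg'd (exp s)).hasDerivAt.comp s (Real.hasDerivAt_exp s)
  have he1 : ∀ s : ℝ, exp ((α+1)*s) = exp (α*s) * exp s := by
    intro s; rw [← Real.exp_add]; congr 1; ring
  have hv : ∀ s, HasDerivAt v (v1 s) s := by
    intro s
    have h := (hA s).mul (hB s)
    rw [hvdef, hv1def]
    refine h.congr_deriv ?_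
    simp only [he1]; ring
  -- v^p identity
  have hvp : ∀ s, v s ^ p = exp ((α+1)*s) * exp s * g (exp s) ^ p := by
    intro s
    simp only [hvdef]
    rw [Real.mul_rpow (exp_pos _).le (hgpos _).le, ← Real.exp_mul]
    rw [show exp (α*s*p) = exp ((α+1)*s) * exp s by
      rw [← Real.exp_add]; congr 1; linear_combination s * hα2]
  -- second derivative of v
  have hv1 : ∀ s, HasDerivAt v1 (-β * v1 s + Qv * v s - v s ^ p) s := by
    intro s
    have h := (((hA s).mul (hB s)).const_mul α).add ((hC s).mul (hD s))
    have hode := hODE (exp s) (exp_pos s)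
    have hg'' : deriv (deriv g) (exp s)
        = -(g (exp s) ^ p) - (nr - 1) * (deriv g (exp s) / exp s) := by linarith
    rw [hv1def]
    refine h.congr_deriv ?_
    rw [hvp s, hg'']
    simp only [hvdef, hv1def, he1, hβdef, hQv']
    have hes := (exp_pos s).ne'
    field_simp
    ring
  -- w and its derivatives
  obtain ⟨w, hwdef⟩ : ∃ f : ℝ → ℝ, f = fun s => exp (β/2*s) * (v s - L) := ⟨_, rfl⟩
  obtain ⟨w1, hw1def⟩ : ∃ f : ℝ → ℝ,
    f = fun s => exp (β/2*s) * (β/2*(v s - L) + v1 s) := ⟨_, rfl⟩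
  have hE : ∀ s : ℝ, HasDerivAt (fun s : ℝ => exp (β/2*s)) (β/2 * exp (β/2*s)) s := by
    intro s
    have := (Real.hasDerivAt_exp (β/2*s)).comp s ((hasDerivAt_id s).const_mul (β/2))
    simpa [Function.comp_def, mul_comm] using this
  have hw : ∀ s, HasDerivAt w (w1 s) s := by
    intro s
    have h := (hE s).mul ((hv s).sub_const L)
    rw [hwdef, hw1def]
    refine h.congr_deriv ?_
    simp only [hvdef]; ring
  have hw1 : ∀ s, HasDerivAt w1
      (exp (β/2*s) * ((β/2)^2*(v s - L) + Qv * v s - v s ^ p)) s := by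
    intro s
    have h := (hE s).mul ((((hv s).sub_const L).const_mul (β/2)).add (hv1 s))
    rw [hw1def]
    refine h.congr_deriv ?_
    simp only [hvdef, hv1def, Pi.add_apply]; ring
  -- pointwise inequality
  have hkey : ∀ t : ℝ, 0 < t → t < L → (β/2)^2*(t - L) + Qv * t - t ^ p ≤ 0 := by
    intro t ht htL
    have htL0 : 0 ≤ t / L := div_nonneg ht.le hLpos.le
    have hber : 1 + p * (t/L - 1) ≤ (t/L) ^ p := by
      have h := one_add_mul_self_le_rpow_one_add (by linarith : (-1:ℝ) ≤ t/L - 1) hp1.le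
      calc 1 + p * (t/L - 1) ≤ (1 + (t/L - 1)) ^ p := h
        _ = (t/L) ^ p := by congr 1; ring
    have htp : (t/L) ^ p * L ^ p = t ^ p := by
      rw [Real.div_rpow ht.le hLpos.le]
      field_simp
    have hLpp : L ^ p = Qv * L := by
      have h5 : L ^ p = L ^ (p-1) * L ^ (1:ℝ) := by
        rw [← Real.rpow_add hLpos]; congr 1; ring
      rw [h5, hLp, Real.rpow_one]
    have h2 : Qv * L + p * Qv * (t - L) ≤ t ^ p := by
      have h3 := mul_le_mul_of_nonneg_right hber (Real.rpow_pos_of_pos hLpos p).le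
      rw [htp, hLpp] at h3
      have h4 : (1 + p * (t/L - 1)) * (Qv * L) = Qv * L + p * Qv * (t - L) := by
        field_simp
      linarith [h4 ▸ h3]
    have hprod : 0 ≤ ((β/2)^2 - (p-1)*Qv) * (L - t) :=
      mul_nonneg (by linarith) (by linarith)
    nlinarith
  -- continuity of v
  have hvcont : Continuous v := by
    rw [hvdef]
    exact (Real.continuous_exp.comp (continuous_const.mul continuous_id)).mul
      (hg.continuous.comp Real.continuous_exp)
  -- v is small near -∞
  obtain ⟨M, hM⟩ := (isCompact_Icc (a := (0:ℝ)) (b := 1)).exists_bound_of_continuousOn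
    hg.continuous.continuousOn
  have hM1 : 0 < M := lt_of_lt_of_le (abs_pos.2 (hgpos 1).ne')
    (by simpa [Real.norm_eq_abs] using hM 1 (by norm_num))
  obtain ⟨sm, hsm⟩ : ∃ x : ℝ, x = min 0 ((Real.log (L/M) - 1)/α) := ⟨_, rfl⟩
  have hsmall : ∀ s ≤ sm, v s < L := by
    intro s hs
    rw [hsm] at hs
    have hs0 : s ≤ 0 := le_trans hs (min_le_left _ _)
    have hgb : g (exp s) ≤ M := by
      have := hM (exp s) (Set.mem_Icc.2 ⟨(exp_pos s).le, Real.exp_le_one_iff.2 hs0⟩)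
      rw [Real.norm_eq_abs] at this
      exact le_trans (le_abs_self _) this
    have h1 : v s ≤ exp (α*s) * M := by
      rw [hvdef]
      exact mul_le_mul_of_nonneg_left hgb (exp_pos _).le
    have h2 : α * s ≤ Real.log (L/M) - 1 := by
      have hs1 : s ≤ (Real.log (L/M) - 1)/α := le_trans hs (min_le_right _ _)
      calc α * s ≤ α * ((Real.log (L/M) - 1)/α) :=
            mul_le_mul_of_nonneg_left hs1 hαpos.le
        _ = Real.log (L/M) - 1 := by field_simp
    have h3 : exp (α*s) < L/M := by
      calc exp (α*s) ≤ exp (Real.log (L/M) - 1) := Real.exp_le_exp.2 h2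
        _ < exp (Real.log (L/M)) := Real.exp_lt_exp.2 (by linarith)
        _ = L/M := Real.exp_log (by positivity)
    calc v s ≤ exp (α*s) * M := h1
      _ < (L/M) * M := mul_lt_mul_of_pos_right h3 hM1
      _ = L := by field_simp
  -- main claim: v ≤ L everywhere
  have hvL : ∀ s, v s ≤ L := by
    by_contra hcon
    push_neg at hcon
    obtain ⟨s₀, hs₀⟩ := hcon
    obtain ⟨S, hS⟩ : ∃ S : Set ℝ, S = {s | L ≤ v s} := ⟨_, rfl⟩
    have hSne : S.Nonempty := ⟨s₀, by rw [hS]; exact hs₀.le⟩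
    have hSclosed : IsClosed S := by rw [hS]; exact isClosed_le continuous_const hvcont
    have hSbdd : BddBelow S := by
      refine ⟨sm, fun s hs => ?_⟩
      by_contra hlt
      push_neg at hlt
      rw [hS] at hs
      exact absurd hs (by simp only [Set.mem_setOf_eq, not_le]; exact hsmall s hlt.le)
    obtain ⟨s₁, hs₁def⟩ : ∃ x : ℝ, x = sInf S := ⟨_, rfl⟩
    have hs₁S : s₁ ∈ S := hs₁def ▸ hSclosed.csInf_mem hSne hSbdd
    have hlt : ∀ s, s < s₁ → v s < L := by
      intro s hss
      by_contra hge
      push_neg at hge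
      have : s₁ ≤ s := hs₁def ▸ csInf_le hSbdd (by rw [hS]; exact hge)
      linarith
    have hvs₁ : v s₁ = L := by
      refine le_antisymm ?_ (by rw [hS] at hs₁S; exact hs₁S)
      have htend : Tendsto v (nhdsWithin s₁ (Set.Iio s₁)) (nhds (v s₁)) :=
        (hvcont.continuousAt).tendsto.mono_left nhdsWithin_le_nhds
      exact le_of_tendsto htend
        (eventually_nhdsWithin_of_forall (fun s hs => (hlt s hs).le))
    -- concavity of w on Iic s₁
    have hwdiff : Differentiable ℝ w := fun s => (hw s).differentiableAt
    have hdw : deriv w = w1 := funext fun s => (hw s).deriv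
    have hwcav : ConcaveOn ℝ (Set.Iic s₁) w := by
      apply concaveOn_of_deriv2_nonpos (convex_Iic s₁)
        (hwdiff.continuous.continuousOn)
        (fun s _ => (hwdiff s).differentiableWithinAt)
        (by rw [hdw]; exact fun s _ => (hw1 s).differentiableAt.differentiableWithinAt)
      intro s hsmem
      rw [interior_Iic] at hsmem
      rw [show deriv^[2] w = deriv (deriv w) by
        rw [Function.iterate_succ_apply', Function.iterate_one]]
      rw [hdw, (hw1 s).deriv]
      exact mul_nonpos_of_nonneg_of_nonpos (exp_pos _).le
        (hkey (v s) (hvpos s) (hlt s hsmem))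
    -- contradiction
    obtain ⟨s₂, hs₂def⟩ : ∃ x : ℝ, x = s₁ - 1 := ⟨_, rfl⟩
    have hs₂lt : s₂ < s₁ := by rw [hs₂def]; linarith
    have hw2neg : w s₂ < 0 := by
      rw [hwdef]
      exact mul_neg_of_pos_of_neg (exp_pos _) (by linarith [hlt s₂ hs₂lt])
    have hws₁ : w s₁ = 0 := by rw [hwdef]; simp [hvs₁]
    have hge : ∀ t, t < s₂ → -L * exp (β/2*t) ≤ w s₂ := by
      intro t ht
      have hts₁ : t < s₁ := lt_trans ht hs₂lt
      have hdenpos : 0 < s₁ - t := by linarith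
      obtain ⟨a, hadef⟩ : ∃ x : ℝ, x = (s₁ - s₂)/(s₁ - t) := ⟨_, rfl⟩
      obtain ⟨b, hbdef⟩ : ∃ x : ℝ, x = (s₂ - t)/(s₁ - t) := ⟨_, rfl⟩
      have ha : 0 ≤ a := by rw [hadef]; exact div_nonneg (by linarith) hdenpos.le
      have hb : 0 ≤ b := by rw [hbdef]; exact div_nonneg (by linarith) hdenpos.le
      have hab : a + b = 1 := by rw [hadef, hbdef]; field_simp; ring
      have hcomb : a • t + b • s₁ = s₂ := by
        rw [hadef, hbdef, smul_eq_mul, smul_eq_mul]; field_simp; ring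
      have hcc := hwcav.2 (Set.mem_Iic.2 hts₁.le) (Set.mem_Iic.2 le_rfl) ha hb hab
      rw [hcomb] at hcc
      have ha1 : a ≤ 1 := by
        rw [hadef, div_le_one hdenpos]; linarith
      have hwt : -L * exp (β/2*t) ≤ w t := by
        rw [hwdef]
        have hvt : -L ≤ v t - L := by linarith [hvpos t]
        calc -L * exp (β/2*t) = exp (β/2*t) * (-L) := by ring
          _ ≤ exp (β/2*t) * (v t - L) := mul_le_mul_of_nonneg_left hvt (exp_pos _).le
      have hwtneg : w t ≤ 0 := by
        rw [hwdef]
        exact mul_nonpos_of_nonneg_of_nonpos (exp_pos _).le (by linarith [hlt t hts₁])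
      have h1 : a * w t ≤ w s₂ := by
        rw [hws₁] at hcc
        simpa [smul_eq_mul] using hcc
      have h2 : -L * exp (β/2*t) ≤ a * w t := by nlinarith
      linarith
    have htend0 : Tendsto (fun t : ℝ => -L * exp (β/2*t)) atBot (nhds 0) := by
      have h1 : Tendsto (fun t : ℝ => β/2*t) atBot atBot :=
        Tendsto.const_mul_atBot (by positivity) tendsto_id
      have h2 : Tendsto (fun t : ℝ => exp (β/2*t)) atBot (nhds 0) :=
        Real.tendsto_exp_atBot.comp h1
      simpa using h2.const_mul (-L)
    have hfin : (0:ℝ) ≤ w s₂ :=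
      le_of_tendsto htend0 (Filter.eventually_atBot.2 ⟨s₂ - 1, fun t ht => hge t (by linarith)⟩)
    linarith
  -- conclude
  intro r hr
  have hveq : v (Real.log r) = r ^ α * g r := by
    simp only [hvdef]
    rw [mul_comm α (Real.log r), Real.exp_mul, Real.exp_log hr]
  have h1 : v (Real.log r) ^ (p-1) = r ^ 2 * g r ^ (p-1) := by
    rw [hveq, Real.mul_rpow (Real.rpow_pos_of_pos hr α).le (hgpos r).le,
      ← Real.rpow_natCast r 2, ← Real.rpow_mul hr.le, hα2]
    norm_num
  have h2 : v (Real.log r) ^ (p-1) ≤ L ^ (p-1) :=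
    Real.rpow_le_rpow (hvpos _).le (hvL _) hp0.le
  rw [h1, hLp] at h2
  exact h2

end Auxiliary

/-- The pointwise bound (5.9) of Lemma 5.4: under the spectral-stability condition
`((n-2)/2)² ≥ p·Q(2/(p-1))`, the radial steady states of the supercritical Lane–Emden
equation lie everywhere below their asymptotic profile. -/
theorem pointwise_bound_below_asymptotic_profile
    (n : ℕ) (hn : 2 < n)
    (p : ℝ) (hp : ((n : ℝ) + 2) / ((n : ℝ) - 2) < p)
    (Q : ℝ → ℝ) (hQ : ∀ α, Q α = α * ((n : ℝ) - 2 - α))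
    (hstab : p * Q (2 / (p - 1)) ≤ (((n : ℝ) - 2) / 2) ^ 2)
    (φ : EuclideanSpace ℝ (Fin n) → ℝ) (hφ : ContDiff ℝ 2 φ)
    (hφpos : ∀ x, 0 < φ x)
    (hrad : ∃ g : ℝ → ℝ, ∀ x, φ x = g ‖x‖)
    (hpde : ∀ x, -lap φ x = φ x ^ p)
    (hasymp : Tendsto (fun x : EuclideanSpace ℝ (Fin n) => ‖x‖ ^ 2 * φ x ^ (p - 1))
      (Filter.cocompact (EuclideanSpace ℝ (Fin n))) (nhds (Q (2 / (p - 1))))) :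
    ∀ x : EuclideanSpace ℝ (Fin n), ‖x‖ ^ 2 * φ x ^ (p - 1) ≤ Q (2 / (p - 1)) := by
  have hn2 : (2:ℝ) < (n:ℝ) := by exact_mod_cast hn
  have hnz : 0 < n := by omega
  have hi0 : (0:ℕ) < n := by omega
  obtain ⟨i0, hi0def⟩ : ∃ i : Fin n, i = (⟨0, hi0⟩ : Fin n) := ⟨_, rfl⟩
  obtain ⟨g₀, hg₀⟩ := hrad
  obtain ⟨g, hgdef⟩ : ∃ g : ℝ → ℝ,
      g = fun t : ℝ => φ (t • EuclideanSpace.single i0 (1:ℝ)) := ⟨_, rfl⟩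
  have hgC2 : ContDiff ℝ 2 g := by
    rw [hgdef]; exact hφ.comp (contDiff_id.smul contDiff_const)
  have hgval : ∀ t : ℝ, φ (t • EuclideanSpace.single i0 (1:ℝ)) = g t := fun t => by
    rw [hgdef]
  have hradg : ∀ x, φ x = g ‖x‖ := by
    intro x
    have h1 : g ‖x‖ = g₀ ‖(‖x‖ : ℝ) • EuclideanSpace.single i0 (1:ℝ)‖ := by
      rw [← hgval]; exact hg₀ _
    rw [hg₀ x, h1, norm_smul]
    congr 1
    simp [EuclideanSpace.norm_single, abs_of_nonneg (norm_nonneg x)]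
  have hgpos : ∀ t, 0 < g t := fun t => by rw [← hgval]; exact hφpos _
  have hODE : ∀ r : ℝ, 0 < r →
      deriv (deriv g) r + ((n:ℝ) - 1) * (deriv g r / r) = -(g r ^ p) := by
    intro r hr
    have h1 := hpde (r • EuclideanSpace.single i0 (1:ℝ))
    rw [lap_radial hnz i0 hφ hgC2 hgval hradg hr, hgval r] at h1
    linarith
  have hp1 : 1 < p := by
    have h1 : (1:ℝ) < ((n:ℝ)+2)/((n:ℝ)-2) := by
      rw [lt_div_iff₀ (by linarith)]; linarith
    linarith
  have hp0 : (0:ℝ) < p - 1 := by linarith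
  have hkey4 : 4 < (p-1) * ((n:ℝ)-2) := by
    have hp' : (n:ℝ)+2 < p * ((n:ℝ)-2) := (div_lt_iff₀ (by linarith)).1 hp
    nlinarith
  have hQvdef : Q (2/(p-1)) = (2/(p-1)) * ((n:ℝ) - 2 - 2/(p-1)) := hQ _
  have hQvpos : 0 < Q (2/(p-1)) := by
    rw [hQvdef]
    apply mul_pos (by positivity)
    have h3 : 2/(p-1) < (n:ℝ)-2 := by rw [div_lt_iff₀ hp0]; nlinarith
    linarith
  have hβ : 0 < (n:ℝ) - 2 - 4/(p-1) := by
    have h3 : 4/(p-1) < (n:ℝ)-2 := by rw [div_lt_iff₀ hp0]; nlinarith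
    linarith
  have hstab2 : (p-1) * Q (2/(p-1)) ≤ (((n:ℝ)-2-4/(p-1))/2)^2 := by
    have hne : p - 1 ≠ 0 := hp0.ne'
    have hid : (((n:ℝ)-2-4/(p-1))/2)^2 - (p-1) * Q (2/(p-1))
        = (((n:ℝ)-2)/2)^2 - p * Q (2/(p-1)) := by
      rw [hQvdef]; field_simp; ring
    linarith [hstab]
  have hmain := radial_bound p (Q (2/(p-1))) ((n:ℝ)) hp1 g hgC2 hgpos hODE hQvdef
    hQvpos hβ hstab2
  intro x
  rcases eq_or_lt_of_le (norm_nonneg x) with h0 | hpos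
  · rw [← h0]
    simpa using hQvpos.le
  · rw [hradg x]
    exact hmain ‖x‖ hpos
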